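/- Let m ∈ ℤ with m ∉ {0, 3, −3}, and let L_m denote the splitting field of f_m(X) = X⁴ − mX³ − 6X² + mX + 1 over ℚ inside a fixed algebraic closure of ℚ. Suppose x, y ∈ ℤ satisfy xy(x + y)(x − y) ≠ 0 and F_m(x, y) divides 4(m² + 16), where F_m(X, Y) = X⁴ − mX³Y − 6X²Y² + mXY³ + Y⁴. Then F_m(x, y) divides (m² + 16)·xy(x + y)(x − y), the integer N := m + (m² + 16)·xy(x + y)(x − y)/F_m(x, y) satisfies N ≠ m and N ≠ −m, and L_N = L_m. -/

import Mathlib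

open Polynomial

/-- The simplest quartic polynomial `X^4 - a*X^3 - 6*X^2 + a*X + 1`. -/
noncomputable def simplestQuartic {K : Type*} [Field K] (a : K) : K[X] :=
  X ^ 4 - C a * X ^ 3 - 6 * X ^ 2 + C a * X + 1

/-- The splitting field of `p` over `K` inside a fixed algebraic closure of `K`. -/
noncomputable def splittingFieldIn (K : Type*) [Field K] (p : K[X]) :
    IntermediateField K (AlgebraicClosure K) :=
  IntermediateField.adjoin K (p.rootSet (AlgebraicClosure K))

/-- The binary quartic form `F_m(x, y) = x^4 - m*x^3*y - 6*x^2*y^2 + m*x*y^3 + y^4`. -/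
def Fq (m x y : ℤ) : ℤ := x ^ 4 - m * x ^ 3 * y - 6 * x ^ 2 * y ^ 2 + m * x * y ^ 3 + y ^ 4

/-- `L_m`: the splitting field of the simplest quartic polynomial `f_m` over `ℚ`
inside a fixed algebraic closure of `ℚ`. -/
noncomputable def Lq (m : ℤ) : IntermediateField ℚ (AlgebraicClosure ℚ) :=
  splittingFieldIn ℚ (simplestQuartic (m : ℚ))


lemma aux_no_sq (m : ℤ) (h0 : m ≠ 0) (h3 : m ≠ 3) (h3' : m ≠ -3) (s : ℤ) :
    s ^ 2 ≠ m ^ 2 + 16 := by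
  intro h
  have h2 : s * s = m * m + 16 := by linear_combination h
  have h' : (s.natAbs : ℤ) * s.natAbs = (m.natAbs : ℤ) * m.natAbs + 16 := by
    rw [Int.natAbs_mul_self', Int.natAbs_mul_self']; exact h2
  have hN : s.natAbs * s.natAbs = m.natAbs * m.natAbs + 16 := by exact_mod_cast h'
  have hb0 : m.natAbs ≠ 0 := by omega
  have hb3 : m.natAbs ≠ 3 := by omega
  set a := s.natAbs with hadef
  set b := m.natAbs with hbdef
  have h1 : b + 1 ≤ a := by
    by_contra hcon
    push_neg at hcon
    have : a * a ≤ b * b := Nat.mul_le_mul (by omega) (by omega)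
    omega
  have e1 : (b + 1) * (b + 1) ≤ a * a := Nat.mul_le_mul h1 h1
  have hb7 : b ≤ 7 := by nlinarith
  have ha8 : a ≤ 8 := by nlinarith
  interval_cases b <;> interval_cases a <;> omega

lemma aux_no_rat (k : ℤ) (r : ℚ) : r ^ 4 - k * r ^ 3 - 6 * r ^ 2 + k * r + 1 ≠ 0 := by
  intro h
  have hd : ((r.den : ℚ)) ≠ 0 := Nat.cast_ne_zero.mpr r.den_nz
  have hr : ((r.num : ℚ)) / ((r.den : ℚ)) = r := Rat.num_div_den r
  have hnd : (r.num : ℚ) = r * (r.den : ℚ) := (div_eq_iff hd).mp hr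
  have key : (r.num : ℚ) ^ 4 - k * (r.num : ℚ) ^ 3 * (r.den : ℚ)
      - 6 * (r.num : ℚ) ^ 2 * (r.den : ℚ) ^ 2 + k * (r.num : ℚ) * (r.den : ℚ) ^ 3
      + (r.den : ℚ) ^ 4 = 0 := by
    rw [hnd]
    linear_combination ((r.den : ℚ)) ^ 4 * h
  have A : r.num ^ 4 - k * r.num ^ 3 * (r.den : ℤ) - 6 * r.num ^ 2 * (r.den : ℤ) ^ 2
      + k * r.num * (r.den : ℤ) ^ 3 + (r.den : ℤ) ^ 4 = 0 := by exact_mod_cast key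
  have hdvd4 : (r.den : ℤ) ∣ r.num ^ 4 :=
    ⟨k * r.num ^ 3 + 6 * r.num ^ 2 * (r.den : ℤ) - k * r.num * (r.den : ℤ) ^ 2
      - (r.den : ℤ) ^ 3, by linear_combination A⟩
  have hdvdN : r.den ∣ r.num.natAbs ^ 4 := by
    have h' := Int.natAbs_dvd_natAbs.mpr hdvd4
    simpa [Int.natAbs_pow] using h'
  have hcop : Nat.Coprime r.den (r.num.natAbs ^ 4) :=
    (Nat.Coprime.pow_right 4 r.reduced.symm)
  have hden1 : r.den = 1 := Nat.Coprime.eq_one_of_dvd hcop hdvdN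
  rw [hden1] at A
  push_cast at A
  have hu : r.num * (-r.num ^ 3 + k * r.num ^ 2 + 6 * r.num - k) = 1 := by
    linear_combination -A
  have := Int.isUnit_iff.mp (IsUnit.of_mul_eq_one _ hu)
  rcases this with h1 | h1 <;> rw [h1] at A <;> norm_num at A <;> omega


lemma key1 {F : Type*} [CommRing F] (m N x y β : F)
    (hrel : N * (x^4 - m*x^3*y - 6*x^2*y^2 + m*x*y^3 + y^4)
      = m * (x^4 - m*x^3*y - 6*x^2*y^2 + m*x*y^3 + y^4) + (m^2+16)*(x*y*(x+y)*(x-y)))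
    (hβ : β^4 - N*β^3 - 6*β^2 + N*β + 1 = 0) :
    (x^4 - m*x^3*y - 6*x^2*y^2 + m*x*y^3 + y^4) *
      ((x*β - y)^4 - m*(x*β - y)^3*(y*β + x) - 6*(x*β - y)^2*(y*β + x)^2
        + m*(x*β - y)*(y*β + x)^3 + (y*β + x)^4) = 0 := by
  linear_combination
    (y^8 - 12*x^2*y^6 + 38*x^4*y^4 - 12*x^6*y^2 + x^8 + 2*m*x*y^7 - 14*m*x^3*y^5
      + 14*m*x^5*y^3 - 2*m*x^7*y + m^2*x^2*y^6 - 2*m^2*x^4*y^4 + m^2*x^6*y^2) * hβ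
    + (β^3 - β) * (x^4 - m*x^3*y - 6*x^2*y^2 + m*x*y^3 + y^4) * hrel

lemma key2 {F : Type*} [CommRing F] (m N x y α : F)
    (hrel : N * (x^4 - m*x^3*y - 6*x^2*y^2 + m*x*y^3 + y^4)
      = m * (x^4 - m*x^3*y - 6*x^2*y^2 + m*x*y^3 + y^4) + (m^2+16)*(x*y*(x+y)*(x-y)))
    (hα : α^4 - m*α^3 - 6*α^2 + m*α + 1 = 0) :
    (x^4 - m*x^3*y - 6*x^2*y^2 + m*x*y^3 + y^4) *
      ((x*α + y)^4 - N*(x*α + y)^3*(x - y*α) - 6*(x*α + y)^2*(x - y*α)^2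
        + N*(x*α + y)*(x - y*α)^3 + (x - y*α)^4) = 0 := by
  linear_combination
    (y^8 - 12*x^2*y^6 + 38*x^4*y^4 - 12*x^6*y^2 + x^8 - N*x*y^7 + 7*N*x^3*y^5
      - 7*N*x^5*y^3 + N*x^7*y + m*x*y^7 - 7*m*x^3*y^5 + 7*m*x^5*y^3 - m*x^7*y
      - m*N*x^2*y^6 + 2*m*N*x^4*y^4 - m*N*x^6*y^2) * hα
    - (α^3 - α) * (x^4 - m*x^3*y - 6*x^2*y^2 + m*x*y^3 + y^4) * hrel

lemma key1' {F : Type*} [Field F] (m N x y β : F)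
    (hc : (x^4 - m*x^3*y - 6*x^2*y^2 + m*x*y^3 + y^4) ≠ 0)
    (hrel : N * (x^4 - m*x^3*y - 6*x^2*y^2 + m*x*y^3 + y^4)
      = m * (x^4 - m*x^3*y - 6*x^2*y^2 + m*x*y^3 + y^4) + (m^2+16)*(x*y*(x+y)*(x-y)))
    (hβ : β^4 - N*β^3 - 6*β^2 + N*β + 1 = 0)
    (hv : y*β + x ≠ 0) :
    ((x*β - y)/(y*β + x))^4 - m*((x*β - y)/(y*β + x))^3 - 6*((x*β - y)/(y*β + x))^2
      + m*((x*β - y)/(y*β + x)) + 1 = 0 := by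
  have hbig2 : (x*β - y)^4 - m*(x*β - y)^3*(y*β + x) - 6*(x*β - y)^2*(y*β + x)^2
      + m*(x*β - y)*(y*β + x)^3 + (y*β + x)^4 = 0 :=
    (mul_eq_zero.mp (key1 m N x y β hrel hβ)).resolve_left hc
  set w : F := (x*β - y)/(y*β + x) with hwdef
  have hw : w * (y*β + x) = x*β - y := div_mul_cancel₀ _ hv
  rw [← hw] at hbig2
  have hfac : (y*β + x)^4 * (w^4 - m*w^3 - 6*w^2 + m*w + 1) = 0 := by
    linear_combination hbig2
  have := (mul_eq_zero.mp hfac).resolve_left (pow_ne_zero 4 hv)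
  exact this

lemma key2' {F : Type*} [Field F] (m N x y α : F)
    (hc : (x^4 - m*x^3*y - 6*x^2*y^2 + m*x*y^3 + y^4) ≠ 0)
    (hrel : N * (x^4 - m*x^3*y - 6*x^2*y^2 + m*x*y^3 + y^4)
      = m * (x^4 - m*x^3*y - 6*x^2*y^2 + m*x*y^3 + y^4) + (m^2+16)*(x*y*(x+y)*(x-y)))
    (hα : α^4 - m*α^3 - 6*α^2 + m*α + 1 = 0)
    (hv : x - y*α ≠ 0) :
    ((x*α + y)/(x - y*α))^4 - N*((x*α + y)/(x - y*α))^3 - 6*((x*α + y)/(x - y*α))^2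
      + N*((x*α + y)/(x - y*α)) + 1 = 0 := by
  have hbig2 : (x*α + y)^4 - N*(x*α + y)^3*(x - y*α) - 6*(x*α + y)^2*(x - y*α)^2
      + N*(x*α + y)*(x - y*α)^3 + (x - y*α)^4 = 0 :=
    (mul_eq_zero.mp (key2 m N x y α hrel hα)).resolve_left hc
  set w : F := (x*α + y)/(x - y*α) with hwdef
  have hw : w * (x - y*α) = x*α + y := div_mul_cancel₀ _ hv
  rw [← hw] at hbig2
  have hfac : (x - y*α)^4 * (w^4 - N*w^3 - 6*w^2 + N*w + 1) = 0 := by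
    linear_combination hbig2
  have := (mul_eq_zero.mp hfac).resolve_left (pow_ne_zero 4 hv)
  exact this

lemma sq_ne_zero (j : ℤ) : simplestQuartic ((j : ℚ)) ≠ 0 := by
  intro h
  have h0 := congrArg (eval 0) h
  simp [simplestQuartic] at h0

lemma mem_rootSet_iff' (j : ℤ) (β : AlgebraicClosure ℚ) :
    β ∈ (simplestQuartic ((j : ℚ))).rootSet (AlgebraicClosure ℚ) ↔
      β ^ 4 - (j : AlgebraicClosure ℚ) * β ^ 3 - 6 * β ^ 2
        + (j : AlgebraicClosure ℚ) * β + 1 = 0 := by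
  rw [mem_rootSet]
  constructor
  · rintro ⟨-, h⟩
    simpa [simplestQuartic, map_ofNat, map_intCast] using h
  · intro h
    exact ⟨sq_ne_zero j, by simpa [simplestQuartic, map_ofNat, map_intCast] using h⟩

lemma Lq_eq_of_rel (k l x y : ℤ) (hy : y ≠ 0) (hc0 : Fq k x y ≠ 0)
    (hrel : l * Fq k x y = k * Fq k x y + (k ^ 2 + 16) * (x * y * (x + y) * (x - y))) :
    Lq l = Lq k := by
  let F := AlgebraicClosure ℚ
  haveI : CharZero F := inferInstance
  have hyF : (y : F) ≠ 0 := Int.cast_ne_zero.mpr hy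
  have hcF : ((x : F)^4 - (k : F)*(x : F)^3*(y : F) - 6*(x : F)^2*(y : F)^2
      + (k : F)*(x : F)*(y : F)^3 + (y : F)^4) ≠ 0 := by
    intro h
    apply hc0
    have h2 : ((Fq k x y : ℤ) : F) = 0 := by push_cast [Fq, F]; linear_combination h
    exact_mod_cast h2
  have hrelF : (l : F) * ((x : F)^4 - (k : F)*(x : F)^3*(y : F) - 6*(x : F)^2*(y : F)^2
        + (k : F)*(x : F)*(y : F)^3 + (y : F)^4)
      = (k : F) * ((x : F)^4 - (k : F)*(x : F)^3*(y : F) - 6*(x : F)^2*(y : F)^2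
        + (k : F)*(x : F)*(y : F)^3 + (y : F)^4)
        + ((k : F)^2 + 16)*((x : F)*(y : F)*((x : F)+(y : F))*((x : F)-(y : F))) := by
    have h2 := congrArg (fun t : ℤ => (t : F)) hrel
    push_cast [Fq, F] at h2
    linear_combination h2
  have hnorat : ∀ (j p q : ℤ), q ≠ 0 → ∀ β : F,
      β ^ 4 - (j : F) * β ^ 3 - 6 * β ^ 2 + (j : F) * β + 1 = 0 →
      β * (q : F) ≠ (p : F) := by
    intro j p q hq β hβ hcontra
    have hqQ : ((q : ℚ)) ≠ 0 := Int.cast_ne_zero.mpr hq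
    set r : ℚ := (p : ℚ) / (q : ℚ) with hrdef
    have hβr : β = ((r : ℚ) : F) := by
      rw [hrdef]
      push_cast
      rw [eq_div_iff (Int.cast_ne_zero.mpr hq)]
      exact hcontra
    refine aux_no_rat j r ?_
    have hcast : ((r ^ 4 - j * r ^ 3 - 6 * r ^ 2 + j * r + 1 : ℚ) : F) = 0 := by
      push_cast
      rw [← hβr]
      exact hβ
    exact_mod_cast hcast
  apply le_antisymm
  · unfold Lq splittingFieldIn
    refine IntermediateField.adjoin_le_iff.mpr ?_
    intro β hβmem
    have hβ : β ^ 4 - (l : F) * β ^ 3 - 6 * β ^ 2 + (l : F) * β + 1 = 0 :=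
      (mem_rootSet_iff' l β).mp hβmem
    have hden1 : (y : F) * β + (x : F) ≠ 0 := by
      intro h0
      exact hnorat l (-x) y hy β hβ (by push_cast; linear_combination h0) 
    have hαeq := key1' (k : F) (l : F) (x : F) (y : F) β hcF hrelF hβ hden1
    set α : F := ((x : F)*β - (y : F)) / ((y : F)*β + (x : F)) with hαdef
    have hαmem : α ∈ IntermediateField.adjoin ℚ
        ((simplestQuartic ((k : ℤ) : ℚ)).rootSet (AlgebraicClosure ℚ)) :=
      IntermediateField.subset_adjoin _ _ ((mem_rootSet_iff' k α).mpr hαeq)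
    have hden2 : (x : F) - (y : F) * α ≠ 0 := by
      intro h0
      exact hnorat k x y hy α hαeq (by linear_combination -h0)
    have hαv : α * ((y : F)*β + (x : F)) = (x : F)*β - (y : F) :=
      div_mul_cancel₀ _ hden1
    have hβval : β = ((x : F) * α + (y : F)) / ((x : F) - (y : F) * α) := by
      rw [eq_div_iff hden2]
      linear_combination -hαv
    rw [hβval]
    have hLx : ((x : ℤ) : F) ∈ IntermediateField.adjoin ℚ
        ((simplestQuartic ((k : ℤ) : ℚ)).rootSet (AlgebraicClosure ℚ)) := intCast_mem _ x
    have hLy : ((y : ℤ) : F) ∈ IntermediateField.adjoin ℚ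
        ((simplestQuartic ((k : ℤ) : ℚ)).rootSet (AlgebraicClosure ℚ)) := intCast_mem _ y
    exact div_mem (add_mem (mul_mem hLx hαmem) hLy) (sub_mem hLx (mul_mem hLy hαmem))
  · unfold Lq splittingFieldIn
    refine IntermediateField.adjoin_le_iff.mpr ?_
    intro α hαmem
    have hα : α ^ 4 - (k : F) * α ^ 3 - 6 * α ^ 2 + (k : F) * α + 1 = 0 :=
      (mem_rootSet_iff' k α).mp hαmem
    have hden2 : (x : F) - (y : F) * α ≠ 0 := by
      intro h0
      exact hnorat k x y hy α hα (by linear_combination -h0)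
    have hβeq := key2' (k : F) (l : F) (x : F) (y : F) α hcF hrelF hα hden2
    set β : F := ((x : F)*α + (y : F)) / ((x : F) - (y : F)*α) with hβdef
    have hβmem : β ∈ IntermediateField.adjoin ℚ
        ((simplestQuartic ((l : ℤ) : ℚ)).rootSet (AlgebraicClosure ℚ)) :=
      IntermediateField.subset_adjoin _ _ ((mem_rootSet_iff' l β).mpr hβeq)
    have hden1 : (y : F) * β + (x : F) ≠ 0 := by
      intro h0
      exact hnorat l (-x) y hy β hβeq (by push_cast; linear_combination h0)
    have hβv : β * ((x : F) - (y : F)*α) = (x : F)*α + (y : F) :=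
      div_mul_cancel₀ _ hden2
    have hαval : α = ((x : F) * β - (y : F)) / ((y : F) * β + (x : F)) := by
      rw [eq_div_iff hden1]
      linear_combination -hβv
    rw [hαval]
    have hLx : ((x : ℤ) : F) ∈ IntermediateField.adjoin ℚ
        ((simplestQuartic ((l : ℤ) : ℚ)).rootSet (AlgebraicClosure ℚ)) := intCast_mem _ x
    have hLy : ((y : ℤ) : F) ∈ IntermediateField.adjoin ℚ
        ((simplestQuartic ((l : ℤ) : ℚ)).rootSet (AlgebraicClosure ℚ)) := intCast_mem _ y
    exact div_mem (sub_mem (mul_mem hLx hβmem) hLy) (add_mem (mul_mem hLy hβmem) hLx)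

theorem simplest_quartic_same_splitting_field_of_thue_solution
    (m : ℤ) (hm : m ∉ ({0, 3, -3} : Set ℤ)) (x y : ℤ)
    (hxy : x * y * (x + y) * (x - y) ≠ 0)
    (hdvd : Fq m x y ∣ 4 * (m ^ 2 + 16)) :
    Fq m x y ∣ (m ^ 2 + 16) * (x * y * (x + y) * (x - y)) ∧
    m + (m ^ 2 + 16) * (x * y * (x + y) * (x - y)) / Fq m x y ≠ m ∧
    m + (m ^ 2 + 16) * (x * y * (x + y) * (x - y)) / Fq m x y ≠ -m ∧
    Lq (m + (m ^ 2 + 16) * (x * y * (x + y) * (x - y)) / Fq m x y) = Lq m := by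
  simp only [Set.mem_insert_iff, Set.mem_singleton_iff, not_or] at hm
  obtain ⟨h0, h3, h3'⟩ := hm
  have hx0 : x ≠ 0 := by rintro rfl; simp at hxy
  have hy0 : y ≠ 0 := by rintro rfl; simp at hxy
  have hE : (0 : ℤ) < m ^ 2 + 16 := by positivity
  have hc0 : Fq m x y ≠ 0 := by
    rintro h
    rw [h] at hdvd
    have h4 := zero_dvd_iff.mp hdvd
    omega
  obtain ⟨kq, hk⟩ := hdvd
  -- Step 1: divisibility
  have hdvdT : Fq m x y ∣ (m ^ 2 + 16) * (x * y * (x + y) * (x - y)) := by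
    have hcase : (4 : ℤ) ∣ x * y * (x + y) * (x - y) ∨ ¬ (2 : ℤ) ∣ Fq m x y := by
      rcases Int.even_or_odd x with ⟨a, ha⟩ | ⟨a, ha⟩ <;>
        rcases Int.even_or_odd y with ⟨b, hb⟩ | ⟨b, hb⟩
      · exact Or.inl ⟨a * b * (x + y) * (x - y), by subst ha hb; ring⟩
      · refine Or.inr ?_
        rintro ⟨t, ht⟩
        have : Fq m x y = 2 * (8*a^4 - 4*m*a^3*y - 12*a^2*y^2 + m*a*y^3) + y^4 := by
          simp only [Fq]; subst ha; ring
        have hy4 : y ^ 4 = 2*(8*b^4 + 16*b^3 + 12*b^2 + 4*b) + 1 := by rw [hb]; ring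
        omega
      · refine Or.inr ?_
        rintro ⟨t, ht⟩
        have : Fq m x y = 2 * (8*b^4 + 4*m*x*b^3 - 12*x^2*b^2 - m*x^3*b) + x^4 := by
          simp only [Fq]; subst hb; ring
        have hx4 : x ^ 4 = 2*(8*a^4 + 16*a^3 + 12*a^2 + 4*a) + 1 := by rw [ha]; ring
        omega
      · exact Or.inl ⟨x * y * (a - b) * (a + b + 1), by subst ha hb; ring⟩
    rcases hcase with ⟨T', hT'⟩ | hodd
    · exact ⟨kq * T', by linear_combination T' * hk + (m ^ 2 + 16) * hT'⟩
    · have h2 : (2 : ℤ) ∣ kq := by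
        have hd : (2 : ℤ) ∣ Fq m x y * kq := ⟨2 * (m ^ 2 + 16), by linear_combination -hk⟩
        exact ((Int.prime_two.2.2 _ _ hd).resolve_left hodd)
      obtain ⟨k1, hk1⟩ := h2
      have h2' : (2 : ℤ) ∣ k1 := by
        have hd : (2 : ℤ) ∣ Fq m x y * k1 := by
          refine ⟨m ^ 2 + 16, ?_⟩
          have h4 : (2 : ℤ) * (Fq m x y * k1) = 2 * (2 * (m ^ 2 + 16)) := by
            linear_combination -hk - Fq m x y * hk1
          exact mul_left_cancel₀ two_ne_zero h4
        exact ((Int.prime_two.2.2 _ _ hd).resolve_left hodd)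
      obtain ⟨k2, hk2⟩ := h2'
      have hck2 : Fq m x y * k2 = m ^ 2 + 16 := by
        have h4 : (4 : ℤ) * (Fq m x y * k2) = 4 * (m ^ 2 + 16) := by
          linear_combination -hk - Fq m x y * hk1 - 2 * Fq m x y * hk2
        exact mul_left_cancel₀ (by norm_num) h4
      exact ⟨k2 * (x * y * (x + y) * (x - y)), by
        linear_combination (-(x * y * (x + y) * (x - y))) * hck2⟩
  set q : ℤ := (m ^ 2 + 16) * (x * y * (x + y) * (x - y)) / Fq m x y with hqdef
  have hq : Fq m x y * q = (m ^ 2 + 16) * (x * y * (x + y) * (x - y)) :=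
    Int.mul_ediv_cancel' hdvdT
  have hq0 : q ≠ 0 := by
    rintro h
    rw [h, mul_zero] at hq
    exact (mul_ne_zero (ne_of_gt hE) hxy) hq.symm
  refine ⟨hdvdT, by omega, ?_, ?_⟩
  · -- m + q ≠ -m
    intro hcontra
    have h2mq : q = -(2 * m) := by omega
    have hA : 2 * x ^ 2 - m * x * y - 2 * y ^ 2 ≠ 0 := by
      intro hA0
      have hsq : (4 * x - m * y) ^ 2 = (m ^ 2 + 16) * y ^ 2 := by linear_combination 8 * hA0
      have hdvdsq : y ^ 2 ∣ (4 * x - m * y) ^ 2 := ⟨m ^ 2 + 16, by linear_combination hsq⟩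
      obtain ⟨s, hs⟩ := (Int.pow_dvd_pow_iff (by norm_num)).mp hdvdsq
      refine aux_no_sq m h0 h3 h3' s ?_
      have h4 : y ^ 2 * s ^ 2 = y ^ 2 * (m ^ 2 + 16) := by
        rw [← mul_pow, ← hs]; linear_combination hsq
      exact (mul_left_cancel₀ (pow_ne_zero 2 hy0) h4)
    have hA' : 8 * x * y + m * (x ^ 2 - y ^ 2) ≠ 0 := by
      intro hA0
      have hsq : (m * y - 4 * x) ^ 2 = (m ^ 2 + 16) * x ^ 2 := by
        linear_combination (-m) * hA0
      have hdvdsq : x ^ 2 ∣ (m * y - 4 * x) ^ 2 := ⟨m ^ 2 + 16, by linear_combination hsq⟩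
      obtain ⟨s, hs⟩ := (Int.pow_dvd_pow_iff (by norm_num)).mp hdvdsq
      refine aux_no_sq m h0 h3 h3' s ?_
      have h4 : x ^ 2 * s ^ 2 = x ^ 2 * (m ^ 2 + 16) := by
        rw [← mul_pow, ← hs]; linear_combination hsq
      exact (mul_left_cancel₀ (pow_ne_zero 2 hx0) h4)
    have hAA : (2 * x ^ 2 - m * x * y - 2 * y ^ 2) * (8 * x * y + m * (x ^ 2 - y ^ 2)) = 0 := by
      have : Fq m x y * (2 * m) + (m ^ 2 + 16) * (x * y * (x + y) * (x - y))
          = (2 * x ^ 2 - m * x * y - 2 * y ^ 2) * (8 * x * y + m * (x ^ 2 - y ^ 2)) := by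
        simp only [Fq]; ring
      rw [← this, ← hq, h2mq]; ring
    exact (mul_ne_zero hA hA') hAA
  · -- splitting field
    exact Lq_eq_of_rel m (m + q) x y hy0 hc0 (by linear_combination hq)
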